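/- arXiv:2206.13151 — 7 statements merged into one kernel-verified Lean document; each statement's English description precedes it below -/
import Mathlib

section
/- The quadruple (φ′, ξ′, θ′, g′) again satisfies all six almost contact identities: φ′(ξ′)=0; θ′(φ′(X))=0 for all X; φ′(φ′(X)) = −X + θ′(X)·ξ′ for all X; θ′(ξ′)=1; g′(X,ξ′)=θ′(X) for all X; and g′(φ′(X),φ′(Y)) = g′(X,Y) − θ′(X)·θ′(Y) for all X,Y. Moreover g′ is symmetric. -/
/-- Lemma 2.3 of the paper: the deformed quadruple (φ′, ξ′, θ′, g′) again satisfies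
all six almost contact identities, and g′ is symmetric. -/
theorem deformed_almost_contact
    {𝕂 : Type*} [Field 𝕂] {V : Type*} [AddCommGroup V] [Module 𝕂 V]
    (φ : V →ₗ[𝕂] V) (ξ : V) (θ : V →ₗ[𝕂] 𝕂) (g : V →ₗ[𝕂] V →ₗ[𝕂] 𝕂)
    (hg_symm : ∀ X Y, g X Y = g Y X)
    (h1 : φ ξ = 0)
    (h2 : ∀ X, θ (φ X) = 0)
    (h3 : ∀ X, φ (φ X) = -X + θ X • ξ)
    (h4 : θ ξ = 1)
    (h5 : ∀ X, g X ξ = θ X)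
    (h6 : ∀ X Y, g (φ X) (φ Y) = g X Y - θ X * θ Y)
    (f F : 𝕂) (hf : f ≠ 0) (hF : F ≠ 0)
    (X₀ : V) (hX₀ : θ X₀ = 0)
    (φ' : V → V) (hφ' : ∀ X, φ' X = φ X - (f * θ X) • φ X₀)
    (ξ' : V) (hξ' : ξ' = X₀ + f⁻¹ • ξ)
    (θ' : V → 𝕂) (hθ' : ∀ X, θ' X = f * θ X)
    (g' : V → V → 𝕂)
    (hg' : ∀ X Y, g' X Y =
      F * g X Y - f * F * g X X₀ * θ Y - f * F * θ X * g Y X₀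
        + (-F + f ^ 2 + f ^ 2 * F * g X₀ X₀) * θ X * θ Y) :
    φ' ξ' = 0 ∧
    (∀ X, θ' (φ' X) = 0) ∧
    (∀ X, φ' (φ' X) = -X + θ' X • ξ') ∧
    θ' ξ' = 1 ∧
    (∀ X, g' X ξ' = θ' X) ∧
    (∀ X Y, g' (φ' X) (φ' Y) = g' X Y - θ' X * θ' Y) ∧
    (∀ X Y, g' X Y = g' Y X) := by
  have hff : f * f⁻¹ = 1 := mul_inv_cancel₀ hf
  have hθξ' : θ ξ' = f⁻¹ := by rw [hξ']; simp [hX₀, h4]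
  have hθφ' : ∀ X, θ (φ' X) = 0 := by
    intro X; rw [hφ']; simp [h2]
  refine ⟨?_, ?_, ?_, ?_, ?_, ?_, ?_⟩
  · rw [hφ', hξ']
    simp [h1, hX₀, h4, mul_add, hff]
  · intro X; rw [hθ', hθφ', mul_zero]
  · intro X
    rw [hφ' (φ' X), hθφ' X, hφ' X, hθ', hξ']
    simp only [map_sub, map_smul, h3, hX₀, zero_smul, add_zero, mul_zero, zero_smul,
      sub_zero, smul_add, smul_smul, smul_neg, mul_assoc, hff, mul_one]
    rw [mul_comm (θ X) f⁻¹, ← mul_assoc, hff, one_mul]; abel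
  · rw [hθ', hθξ', hff]
  · intro X
    rw [hg', hθ', hθξ', hξ']
    simp only [map_add, map_smul, LinearMap.add_apply, LinearMap.smul_apply, smul_eq_mul,
      h5, hX₀, hg_symm ξ X₀, h5 X₀, hX₀]
    field_simp
    ring
  · intro X Y
    rw [hg' (φ' X) (φ' Y), hθφ', hθφ', hg', hθ', hθ', hφ', hφ']
    simp only [map_sub, map_smul, LinearMap.sub_apply, LinearMap.smul_apply, smul_eq_mul,
      h6, h2, hX₀, hg_symm (φ Y) (φ X₀)]
    rw [hg_symm Y X₀]
    ring
  · intro X Y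
    rw [hg', hg', hg_symm X Y, hg_symm X X₀, hg_symm Y X₀]
    ring
end

section
/- For every X ∈ V one has φ′(φ′(X)) = −X + θ′(X)·ξ′, i.e. the deformed endomorphism φ′ satisfies the almost contact squaring identity with respect to the deformed 1-form θ′ and deformed vector ξ′. -/
/-- The deformed endomorphism φ′ satisfies the almost contact squaring identity
φ′(φ′(X)) = −X + θ′(X)·ξ′. -/
theorem deformed_phi_squaring_identity
    {𝕂 : Type*} [Field 𝕂] {V : Type*} [AddCommGroup V] [Module 𝕂 V]
    (φ : V →ₗ[𝕂] V) (ξ : V) (θ : V →ₗ[𝕂] 𝕂) (g : V →ₗ[𝕂] V →ₗ[𝕂] 𝕂)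
    (hg_symm : ∀ X Y, g X Y = g Y X)
    (h1 : φ ξ = 0)
    (h2 : ∀ X, θ (φ X) = 0)
    (h3 : ∀ X, φ (φ X) = -X + θ X • ξ)
    (h4 : θ ξ = 1)
    (h5 : ∀ X, g X ξ = θ X)
    (h6 : ∀ X Y, g (φ X) (φ Y) = g X Y - θ X * θ Y)
    (f F : 𝕂) (hf : f ≠ 0) (hF : F ≠ 0)
    (X₀ : V) (hX₀ : θ X₀ = 0)
    (φ' : V → V) (hφ' : ∀ X, φ' X = φ X - (f * θ X) • φ X₀)
    (ξ' : V) (hξ' : ξ' = X₀ + f⁻¹ • ξ)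
    (θ' : V → 𝕂) (hθ' : ∀ X, θ' X = f * θ X) :
    ∀ X, φ' (φ' X) = -X + θ' X • ξ' := by
  intro X
  rw [hφ', hφ', hξ', hθ']
  simp only [map_sub, map_smul, h2, h3, hX₀, mul_zero, zero_smul, sub_zero, smul_add,
    smul_smul, smul_neg, smul_zero, sub_zero, zero_sub, neg_zero, mul_zero]
  rw [mul_comm f (θ X), mul_inv_cancel_right₀ hf]
  abel
end

section
/- For every X ∈ V one has g′(ξ′, X) = θ′(X), i.e. the deformed metric g′ and the deformed vector ξ′ reproduce the deformed 1-form θ′. -/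
/-- The deformed metric g′ and the deformed vector ξ′ reproduce the deformed
1-form θ′ : g′(ξ′, X) = θ′(X). -/
theorem deformed_metric_reproduces_deformed_one_form
    {𝕂 : Type*} [Field 𝕂] {V : Type*} [AddCommGroup V] [Module 𝕂 V]
    (φ : V →ₗ[𝕂] V) (ξ : V) (θ : V →ₗ[𝕂] 𝕂) (g : V →ₗ[𝕂] V →ₗ[𝕂] 𝕂)
    (hg_symm : ∀ X Y, g X Y = g Y X)
    (h1 : φ ξ = 0)
    (h2 : ∀ X, θ (φ X) = 0)
    (h3 : ∀ X, φ (φ X) = -X + θ X • ξ)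
    (h4 : θ ξ = 1)
    (h5 : ∀ X, g X ξ = θ X)
    (h6 : ∀ X Y, g (φ X) (φ Y) = g X Y - θ X * θ Y)
    (f F : 𝕂) (hf : f ≠ 0) (hF : F ≠ 0)
    (X₀ : V) (hX₀ : θ X₀ = 0)
    (ξ' : V) (hξ' : ξ' = X₀ + f⁻¹ • ξ)
    (θ' : V → 𝕂) (hθ' : ∀ X, θ' X = f * θ X)
    (g' : V → V → 𝕂)
    (hg' : ∀ X Y, g' X Y =
      F * g X Y - f * F * g X X₀ * θ Y - f * F * θ X * g Y X₀
        + (-F + f ^ 2 + f ^ 2 * F * g X₀ X₀) * θ X * θ Y) :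
    ∀ X, g' ξ' X = θ' X := by
  intro X
  have hgX0 : g ξ X₀ = 0 := by rw [hg_symm, h5, hX₀]
  rw [hg' , hθ', hξ']
  simp only [map_add, map_smul, LinearMap.add_apply, LinearMap.smul_apply, smul_eq_mul,
    hX₀, h4, h5, hgX0, hg_symm X X₀, hg_symm ξ X]
  field_simp
  ring
end

section
/- For all X, Y ∈ V one has g′(φ′(X), φ′(Y)) = g′(X,Y) − θ′(X)·θ′(Y), i.e. the deformed metric g′ is compatible with the deformed endomorphism φ′ and the deformed 1-form θ′. -/
/-- Compatibility of the deformed metric with the deformed endomorphism: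
g′(φ′(X), φ′(Y)) = g′(X,Y) − θ′(X)·θ′(Y). -/
theorem deformed_metric_compatibility
    {𝕂 : Type*} [Field 𝕂] {V : Type*} [AddCommGroup V] [Module 𝕂 V]
    (φ : V →ₗ[𝕂] V) (ξ : V) (θ : V →ₗ[𝕂] 𝕂) (g : V →ₗ[𝕂] V →ₗ[𝕂] 𝕂)
    (hg_symm : ∀ X Y, g X Y = g Y X)
    (h1 : φ ξ = 0)
    (h2 : ∀ X, θ (φ X) = 0)
    (h3 : ∀ X, φ (φ X) = -X + θ X • ξ)
    (h4 : θ ξ = 1)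
    (h5 : ∀ X, g X ξ = θ X)
    (h6 : ∀ X Y, g (φ X) (φ Y) = g X Y - θ X * θ Y)
    (f F : 𝕂) (hf : f ≠ 0) (hF : F ≠ 0)
    (X₀ : V) (hX₀ : θ X₀ = 0)
    (φ' : V → V) (hφ' : ∀ X, φ' X = φ X - (f * θ X) • φ X₀)
    (θ' : V → 𝕂) (hθ' : ∀ X, θ' X = f * θ X)
    (g' : V → V → 𝕂)
    (hg' : ∀ X Y, g' X Y =
      F * g X Y - f * F * g X X₀ * θ Y - f * F * θ X * g Y X₀
        + (-F + f ^ 2 + f ^ 2 * F * g X₀ X₀) * θ X * θ Y) :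
    ∀ X Y, g' (φ' X) (φ' Y) = g' X Y - θ' X * θ' Y := by
  intro X Y
  have hsym : g X₀ Y = g Y X₀ := hg_symm X₀ Y
  simp only [hg', hφ', hθ', map_sub, map_smul, LinearMap.sub_apply, LinearMap.smul_apply,
    smul_eq_mul, h2, h6, hX₀, hsym]
  ring
end

section
/- For every y ∈ M₂(ℂ), t ∈ ℂ, a ∈ M₂(ℂ) and b ∈ ℂ, the following equivalence holds: there exists ζ ∈ ℂ with P_{y,t}(ζ) = P_{y+a, t+b}(ζ) if and only if [there exists ζ ∈ ℂ with a₀₀ + ζ·a₀₁ = 0 and a₁₀ + ζ·a₁₁ = 0] and b − y₀₀·a₁₁ − y₁₀·a₀₁ + y₀₁·a₁₀ + y₁₁·a₀₀ = 0. -/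
open Complex

/-- The point of the Ren–Wang twistor line `C_{(y,t)}` in the coordinate chart
`W = ℂ⁴`, at parameter `ζ`. Here `⟨w, w̃⟩ = w₁·w̃₂ + w̃₁·w₂`. -/
noncomputable def renWangLinePoint (y₀₀ y₀₁ y₁₀ y₁₁ t ζ : ℂ) : ℂ × ℂ × ℂ × ℂ :=
  (ζ, y₀₀ + ζ * y₀₁, y₁₀ + ζ * y₁₁,
    t - ((y₀₀ + ζ * y₀₁) * y₁₁ + y₀₁ * (y₁₀ + ζ * y₁₁)))

/-- Lemma 5.2 of the paper: the twistor lines `C_{(y,t)}` and `C_{(y,t)+v}`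
intersect iff there is a `ζ` solving the two linear equations and the linear
relation `b − y₀₀a₁₁ − y₁₀a₀₁ + y₀₁a₁₀ + y₁₁a₀₀ = 0` holds. -/
theorem renWang_lines_intersect_iff
    (y₀₀ y₀₁ y₁₀ y₁₁ t a₀₀ a₀₁ a₁₀ a₁₁ b : ℂ) :
    (∃ ζ : ℂ, renWangLinePoint y₀₀ y₀₁ y₁₀ y₁₁ t ζ =
        renWangLinePoint (y₀₀ + a₀₀) (y₀₁ + a₀₁) (y₁₀ + a₁₀) (y₁₁ + a₁₁) (t + b) ζ) ↔
      ((∃ ζ : ℂ, a₀₀ + ζ * a₀₁ = 0 ∧ a₁₀ + ζ * a₁₁ = 0) ∧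
        b - y₀₀ * a₁₁ - y₁₀ * a₀₁ + y₀₁ * a₁₀ + y₁₁ * a₀₀ = 0) := by
  constructor
  · rintro ⟨ζ, h⟩
    rw [renWangLinePoint, renWangLinePoint, Prod.ext_iff, Prod.ext_iff, Prod.ext_iff] at h
    obtain ⟨-, h2, h3, h4⟩ := h
    have he1 : a₀₀ + ζ * a₀₁ = 0 := by linear_combination -h2
    have he2 : a₁₀ + ζ * a₁₁ = 0 := by linear_combination -h3
    exact ⟨⟨ζ, he1, he2⟩, by
      linear_combination -h4 + (2*y₁₁+a₁₁)*he1 + (2*y₀₁+a₀₁)*he2⟩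
  · rintro ⟨⟨ζ, he1, he2⟩, hb⟩
    refine ⟨ζ, ?_⟩
    rw [renWangLinePoint, renWangLinePoint, Prod.ext_iff, Prod.ext_iff, Prod.ext_iff]
    refine ⟨rfl, by linear_combination -he1, by linear_combination -he2, ?_⟩
    linear_combination (2*y₁₁+a₁₁)*he1 + (2*y₀₁+a₀₁)*he2 - hb
end

section
/- The range of F equals the set {(ζ, ω₀, ω₁, ω₂) ∈ ℂ⁴ : (1 + |ζ|²)·Re(ω₂) = |ω₁|² − |ω₀|² − 2·Re(ω₀·ω₁·conj(ζ))}. -/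
open Complex

/-- Parametrization of the image in the chart `W = ℂ⁴` of the CR twistor space
of the real slice of the Ren–Wang spacetime. -/
noncomputable def crTwistorParam (p : ℝ × ℝ × ℝ × ℝ × ℝ × ℂ) : ℂ × ℂ × ℂ × ℂ :=
  let x₁ := p.1; let x₂ := p.2.1; let x₃ := p.2.2.1; let x₄ := p.2.2.2.1
  let s := p.2.2.2.2.1; let ζ := p.2.2.2.2.2
  let y₀₀ : ℂ := (x₁ : ℂ) + Complex.I * (x₂ : ℂ)
  let y₀₁ : ℂ := -(x₃ : ℂ) + Complex.I * (x₄ : ℂ)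
  let y₁₀ : ℂ := (x₃ : ℂ) + Complex.I * (x₄ : ℂ)
  let y₁₁ : ℂ := (x₁ : ℂ) - Complex.I * (x₂ : ℂ)
  let t : ℂ := -2 * Complex.I * (s : ℂ)
  let ω₀ : ℂ := y₀₀ + ζ * y₀₁
  let ω₁ : ℂ := y₁₀ + ζ * y₁₁
  (ζ, ω₀, ω₁, t - (ω₀ * y₁₁ + y₀₁ * ω₁))

private theorem crTwistor_aux (ζ w0 w1 w2 : ℂ)
    (h : (1 + ‖ζ‖ ^ 2) * w2.re =
      ‖w1‖ ^ 2 - ‖w0‖ ^ 2 - 2 * (w0 * w1 * (starRingEnd ℂ) ζ).re) :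
    ∃ x₁ x₂ x₃ x₄ s : ℝ,
      (((x₁:ℂ) + I*x₂) + ζ * (-(x₃:ℂ) + I*x₄) = w0) ∧
      (((x₃:ℂ) + I*x₄) + ζ * ((x₁:ℂ) - I*x₂) = w1) ∧
      (-2 * I * (s:ℂ) - (w0 * ((x₁:ℂ) - I*x₂) + (-(x₃:ℂ) + I*x₄) * w1) = w2) := by
  set d : ℝ := 1 + ‖ζ‖ ^ 2 with hd_def
  have hd : d ≠ 0 := by positivity
  have hdC : (d:ℂ) ≠ 0 := by exact_mod_cast hd
  set a : ℂ := (w0 + ζ * (starRingEnd ℂ) w1) / (d : ℂ) with ha_def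
  have had : a * (d : ℂ) = w0 + ζ * (starRingEnd ℂ) w1 := by
    rw [ha_def, div_mul_cancel₀ _ hdC]
  have had' : (starRingEnd ℂ) a * (d:ℂ) = (starRingEnd ℂ) w0 + (starRingEnd ℂ) ζ * w1 := by
    have := congrArg (starRingEnd ℂ) had
    simpa [map_mul, Complex.conj_ofReal] using this
  set b : ℂ := (starRingEnd ℂ) ζ * a - (starRingEnd ℂ) w1 with hb_def
  set z : ℂ := w0 * (starRingEnd ℂ) a + b * w1 with hz_def
  have hzz : ζ * ((starRingEnd ℂ) ζ) = ((‖ζ‖^2 : ℝ) : ℂ) := by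
    simp [Complex.mul_conj, Complex.normSq_eq_norm_sq]
  have hdC2 : (d:ℂ) = 1 + ((‖ζ‖^2:ℝ):ℂ) := by rw [hd_def]; push_cast; ring
  refine ⟨a.re, a.im, -b.re, b.im, -(w2.im + z.im)/2, ?_, ?_, ?_⟩
  · have e1 : ((a.re:ℂ) + I*(a.im:ℂ)) = a := by rw [mul_comm]; exact Complex.re_add_im a
    push_cast
    rw [neg_neg, e1]
    have e2 : ((b.re:ℂ) + I*(b.im:ℂ)) = b := by rw [mul_comm]; exact Complex.re_add_im b
    rw [e2, hb_def]
    rw [hdC2] at had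
    linear_combination had + a * hzz
  · have e3 : (-(b.re:ℂ) + I*(b.im:ℂ)) = -((starRingEnd ℂ) b) := by
      apply Complex.ext <;> simp
    have e4 : ((a.re:ℂ) - I*(a.im:ℂ)) = (starRingEnd ℂ) a := by
      apply Complex.ext <;> simp
    push_cast
    rw [e3, e4, hb_def]
    simp only [map_sub, map_mul, Complex.conj_conj]
    ring
  · have e4 : ((a.re:ℂ) - I*(a.im:ℂ)) = (starRingEnd ℂ) a := by
      apply Complex.ext <;> simp
    have e3 : (-((-b.re:ℝ):ℂ) + I*(b.im:ℂ)) = b := by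
      push_cast; rw [neg_neg, mul_comm]; exact Complex.re_add_im b
    rw [e4, e3, ← hz_def]
    have hz2 : (d:ℂ) * z = w0 * ((starRingEnd ℂ) w0 + (starRingEnd ℂ) ζ * w1) +
        ((starRingEnd ℂ) ζ * (w0 + ζ * (starRingEnd ℂ) w1) - (d:ℂ) * (starRingEnd ℂ) w1) * w1 := by
      rw [hz_def, hb_def]
      linear_combination w0 * had' + w1 * ((starRingEnd ℂ) ζ) * had
    have hre2 : d * z.re = (w0 * ((starRingEnd ℂ) w0 + (starRingEnd ℂ) ζ * w1) +
        ((starRingEnd ℂ) ζ * (w0 + ζ * (starRingEnd ℂ) w1) - (d:ℂ) * (starRingEnd ℂ) w1) * w1).re := by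
      rw [← Complex.re_ofReal_mul, hz2]
    have hkey : z.re = -w2.re := by
      have hmain : d * (z.re + w2.re) = 0 := by
        simp only [hz_def, hb_def, hd_def, Complex.sq_norm,
          Complex.normSq_apply, Complex.add_re, Complex.add_im, Complex.mul_re,
          Complex.mul_im, Complex.sub_re, Complex.sub_im, Complex.neg_re, Complex.neg_im,
          Complex.conj_re, Complex.conj_im, Complex.ofReal_re, Complex.ofReal_im] at h hre2 ⊢
        linear_combination hre2 + h
      rcases mul_eq_zero.mp hmain with h' | h'
      · exact absurd h' hd
      · linarith
    apply Complex.ext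
    · simp [hkey]
    · simp; ring

/-- The image of the CR twistor space of the real slice in the chart `W` is cut
out by `(1+|ζ|²)·Re(ω₂) = |ω₁|² − |ω₀|² − 2·Re(ω₀ω₁ζ̄)`. -/
theorem crTwistorParam_range :
    Set.range crTwistorParam =
      {p : ℂ × ℂ × ℂ × ℂ |
        (1 + ‖p.1‖ ^ 2) * p.2.2.2.re =
          ‖p.2.2.1‖ ^ 2 - ‖p.2.1‖ ^ 2 -
            2 * (p.2.1 * p.2.2.1 * (starRingEnd ℂ) p.1).re} := by
  ext p
  obtain ⟨ζ, w0, w1, w2⟩ := p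
  constructor
  · rintro ⟨⟨x₁, x₂, x₃, x₄, s, ζ'⟩, hq⟩
    simp only [crTwistorParam, Prod.mk.injEq] at hq
    obtain ⟨rfl, rfl, rfl, rfl⟩ := hq
    simp only [Set.mem_setOf_eq]
    simp only [Complex.sq_norm, Complex.normSq_apply,
      Complex.add_re, Complex.add_im, Complex.mul_re, Complex.mul_im, Complex.sub_re,
      Complex.sub_im, Complex.neg_re, Complex.neg_im, Complex.I_re, Complex.I_im,
      Complex.ofReal_re, Complex.ofReal_im, Complex.conj_re, Complex.conj_im,
      Complex.re_ofNat, Complex.im_ofNat]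
    ring
  · intro h
    simp only [Set.mem_setOf_eq] at h
    obtain ⟨x₁, x₂, x₃, x₄, s, h1, h2, h3⟩ := crTwistor_aux ζ w0 w1 w2 h
    refine ⟨(x₁, x₂, x₃, x₄, s, ζ), ?_⟩
    rw [← h1, ← h2] at h3
    exact Prod.ext rfl (Prod.ext h1 (Prod.ext h2 h3))
end

section
/- The map F is injective. -/
open Complex

/-- The parametrization of the CR twistor space in the chart `W` is injective. -/
theorem crTwistorParam_injective : Function.Injective crTwistorParam := by
  rintro ⟨x1, x2, x3, x4, s, ζ⟩ ⟨y1, y2, y3, y4, r, ξ⟩ h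
  simp only [crTwistorParam, Prod.mk.injEq] at h
  obtain ⟨hζ, h0, h1, ht⟩ := h
  subst hζ
  have e0 : (((x1 - y1 : ℝ) : ℂ) + Complex.I * ((x2 - y2 : ℝ) : ℂ))
      - ζ * (((x3 - y3 : ℝ) : ℂ) - Complex.I * ((x4 - y4 : ℝ) : ℂ)) = 0 := by
    push_cast
    linear_combination h0
  have e1 : (((x3 - y3 : ℝ) : ℂ) + Complex.I * ((x4 - y4 : ℝ) : ℂ))
      + ζ * (((x1 - y1 : ℝ) : ℂ) - Complex.I * ((x2 - y2 : ℝ) : ℂ)) = 0 := by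
    push_cast
    linear_combination h1
  have e0' : (((x1 - y1 : ℝ) : ℂ) - Complex.I * ((x2 - y2 : ℝ) : ℂ))
      - (starRingEnd ℂ ζ) * (((x3 - y3 : ℝ) : ℂ) + Complex.I * ((x4 - y4 : ℝ) : ℂ)) = 0 := by
    have := congrArg (starRingEnd ℂ) e0
    simp [map_sub, map_add, map_mul, Complex.conj_ofReal, Complex.conj_I] at this ⊢
    linear_combination this
  have key : (ζ * (starRingEnd ℂ ζ) + 1) *
      (((x3 - y3 : ℝ) : ℂ) + Complex.I * ((x4 - y4 : ℝ) : ℂ)) = 0 := by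
    linear_combination e1 - ζ * e0'
  have hb0 : (((x3 - y3 : ℝ) : ℂ) + Complex.I * ((x4 - y4 : ℝ) : ℂ)) = 0 := by
    rcases mul_eq_zero.mp key with hk | hk
    · exfalso
      rw [Complex.mul_conj] at hk
      have : (Complex.normSq ζ + 1 : ℝ) = 0 := by exact_mod_cast hk
      nlinarith [Complex.normSq_nonneg ζ]
    · exact hk
  have ha0 : (((x1 - y1 : ℝ) : ℂ) + Complex.I * ((x2 - y2 : ℝ) : ℂ)) = 0 := by
    have h34 : ((x3 - y3 : ℝ) : ℂ) = 0 ∧ ((x4 - y4 : ℝ) : ℂ) = 0 := by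
      constructor <;> [have := congrArg Complex.re hb0; have := congrArg Complex.im hb0] <;>
        · simp at this; exact_mod_cast this
    linear_combination e0 + ζ * h34.1 - ζ * Complex.I * h34.2
  have hx1 : x1 = y1 := by
    have := congrArg Complex.re ha0; simp at this; linarith
  have hx2 : x2 = y2 := by
    have := congrArg Complex.im ha0; simp at this; linarith
  have hx3 : x3 = y3 := by
    have := congrArg Complex.re hb0; simp at this; linarith
  have hx4 : x4 = y4 := by
    have := congrArg Complex.im hb0; simp at this; linarith
  subst hx1 hx2 hx3 hx4
  have hs : (s : ℂ) = (r : ℂ) := by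
    have h2 : (-2 * Complex.I) * (s : ℂ) = (-2 * Complex.I) * (r : ℂ) := by
      linear_combination ht
    have hni : (-2 * Complex.I : ℂ) ≠ 0 := by
      simp [Complex.I_ne_zero]
    exact mul_left_cancel₀ hni h2
  have : s = r := by exact_mod_cast hs
  subst this
  rfl
end
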